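/- Let λ > 1, u(t) = (arccosh(λt) − arccosh(λ))/λ, v(t) = √(λ² − 1) − √(λ² − t²), and w(t) = ∂_λ(v(t) − u(t)). Then w(1) = 0, w'(1) = 0, and w''(t) < 0 for all t ∈ (1/λ, λ); consequently w(t) ≤ 0 on (1/λ, λ). -/

import Mathlib

open Real

/-- The inverse hyperbolic cosine. -/
noncomputable def arccosh (x : ℝ) : ℝ := Real.log (x + Real.sqrt (x ^ 2 - 1))

lemma hasDerivAt_arccosh {x : ℝ} (hx : 1 < x) :
    HasDerivAt arccosh (1 / Real.sqrt (x ^ 2 - 1)) x := by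
  have hx0 : 0 < x := lt_trans one_pos hx
  have h1 : 0 < x ^ 2 - 1 := by nlinarith
  have hs : 0 < Real.sqrt (x ^ 2 - 1) := Real.sqrt_pos.mpr h1
  have hinner : HasDerivAt (fun y : ℝ => y + Real.sqrt (y ^ 2 - 1))
      (1 + 2 * x / (2 * Real.sqrt (x ^ 2 - 1))) x := by
    have h2 : HasDerivAt (fun y : ℝ => y ^ 2 - 1) (2 * x) x := by
      simpa using ((hasDerivAt_pow 2 x).sub_const 1)
    exact (hasDerivAt_id x).add (h2.sqrt (ne_of_gt h1))
  have hpos : 0 < x + Real.sqrt (x ^ 2 - 1) := by positivity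
  have := hinner.log (ne_of_gt hpos)
  convert this using 1
  · rfl
  field_simp
  ring

noncomputable def Ffun (lam t : ℝ) : ℝ :=
  lam / Real.sqrt (lam ^ 2 - 1) - lam / Real.sqrt (lam ^ 2 - t ^ 2)
    - t / (lam * Real.sqrt (lam ^ 2 * t ^ 2 - 1)) + 1 / (lam * Real.sqrt (lam ^ 2 - 1))
    + (arccosh (lam * t) - arccosh lam) / lam ^ 2

noncomputable def Gfun (lam t : ℝ) : ℝ :=
  -(lam * t) / ((lam ^ 2 - t ^ 2) * Real.sqrt (lam ^ 2 - t ^ 2))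
    + 1 / (lam * ((lam ^ 2 * t ^ 2 - 1) * Real.sqrt (lam ^ 2 * t ^ 2 - 1)))
    + 1 / (lam * Real.sqrt (lam ^ 2 * t ^ 2 - 1))

noncomputable def Hfun (lam t : ℝ) : ℝ :=
  -(lam * (lam ^ 2 + 2 * t ^ 2)) / ((lam ^ 2 - t ^ 2) ^ 2 * Real.sqrt (lam ^ 2 - t ^ 2))
    - (lam * t * (lam ^ 2 * t ^ 2 + 2)) / ((lam ^ 2 * t ^ 2 - 1) ^ 2 * Real.sqrt (lam ^ 2 * t ^ 2 - 1))

section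
variable {lam t : ℝ} (hlam : 1 < lam) (ht : t ∈ Set.Ioo (1 / lam) lam)

lemma basic_facts (hlam : 1 < lam) (ht : t ∈ Set.Ioo (1 / lam) lam) :
    0 < t ∧ 1 < lam * t ∧ 0 < lam ^ 2 - t ^ 2 ∧ 0 < lam ^ 2 * t ^ 2 - 1 ∧ 0 < lam ^ 2 - 1 := by
  obtain ⟨h1, h2⟩ := ht
  have hlam0 : 0 < lam := lt_trans one_pos hlam
  have ht0 : 0 < t := lt_trans (by positivity) h1
  have hmt : 1 < lam * t := by
    have := (div_lt_iff₀ hlam0).mp h1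
    linarith [this]
  refine ⟨ht0, hmt, by nlinarith, by nlinarith, by nlinarith⟩

/-- derivative in mu of the explicit expression at lam -/
lemma hasDerivAt_mu (hlam : 1 < lam) (ht : t ∈ Set.Ioo (1 / lam) lam) :
    HasDerivAt (fun mu : ℝ =>
        (Real.sqrt (mu ^ 2 - 1) - Real.sqrt (mu ^ 2 - t ^ 2))
          - (arccosh (mu * t) - arccosh mu) / mu)
      (Ffun lam t) lam := by
  obtain ⟨ht0, hmt, hA, hB, hC⟩ := basic_facts hlam ht
  have hlam0 : 0 < lam := lt_trans one_pos hlam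
  set s1 := Real.sqrt (lam ^ 2 - 1) with hs1d
  set s2 := Real.sqrt (lam ^ 2 - t ^ 2) with hs2d
  set s3 := Real.sqrt (lam ^ 2 * t ^ 2 - 1) with hs3d
  have hs1 : 0 < s1 := Real.sqrt_pos.mpr hC
  have hs2 : 0 < s2 := Real.sqrt_pos.mpr hA
  have hs3 : 0 < s3 := Real.sqrt_pos.mpr hB
  have d1 : HasDerivAt (fun mu : ℝ => Real.sqrt (mu ^ 2 - 1)) (2 * lam / (2 * s1)) lam := by
    have h2 : HasDerivAt (fun mu : ℝ => mu ^ 2 - 1) (2 * lam) lam := by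
      simpa using ((hasDerivAt_pow 2 lam).sub_const 1)
    exact h2.sqrt (ne_of_gt hC)
  have d2 : HasDerivAt (fun mu : ℝ => Real.sqrt (mu ^ 2 - t ^ 2)) (2 * lam / (2 * s2)) lam := by
    have h2 : HasDerivAt (fun mu : ℝ => mu ^ 2 - t ^ 2) (2 * lam) lam := by
      simpa using ((hasDerivAt_pow 2 lam).sub_const (t ^ 2))
    exact h2.sqrt (ne_of_gt hA)
  have d3 : HasDerivAt (fun mu : ℝ => arccosh (mu * t)) (1 / s3 * t) lam := by
    have hc : HasDerivAt (fun mu : ℝ => mu * t) t lam := hasDerivAt_mul_const t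
    have := (hasDerivAt_arccosh hmt).comp lam hc
    exact this.congr_deriv (by simp [hs3d, mul_pow])
  have d4 : HasDerivAt (fun mu : ℝ => arccosh mu) (1 / s1) lam := hasDerivAt_arccosh hlam
  have d5 : HasDerivAt (fun mu : ℝ => (arccosh (mu * t) - arccosh mu) / mu)
      (((1 / s3 * t - 1 / s1) * lam - (arccosh (lam * t) - arccosh lam) * 1) / lam ^ 2) lam :=
    (d3.sub d4).div (hasDerivAt_id lam) (ne_of_gt hlam0)
  have := (d1.sub d2).sub d5
  refine this.congr_deriv ?_
  rw [Ffun]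
  field_simp
  ring
end

section
variable {lam t : ℝ}

lemma hasDerivAt_F (hlam : 1 < lam) (ht : t ∈ Set.Ioo (1 / lam) lam) :
    HasDerivAt (Ffun lam) (Gfun lam t) t := by
  obtain ⟨ht0, hmt, hA, hB, hC⟩ := basic_facts hlam ht
  have hlam0 : 0 < lam := lt_trans one_pos hlam
  set s2 := Real.sqrt (lam ^ 2 - t ^ 2) with hs2d
  set s3 := Real.sqrt (lam ^ 2 * t ^ 2 - 1) with hs3d
  have hs2 : 0 < s2 := Real.sqrt_pos.mpr hA
  have hs3 : 0 < s3 := Real.sqrt_pos.mpr hB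
  have hs2sq : s2 ^ 2 = lam ^ 2 - t ^ 2 := Real.sq_sqrt (le_of_lt hA)
  have hs3sq : s3 ^ 2 = lam ^ 2 * t ^ 2 - 1 := Real.sq_sqrt (le_of_lt hB)
  -- d/dt sqrt(lam^2 - t^2) = -2t/(2 s2)
  have e2 : HasDerivAt (fun x : ℝ => Real.sqrt (lam ^ 2 - x ^ 2)) (-(2 * t) / (2 * s2)) t := by
    have h2 : HasDerivAt (fun x : ℝ => lam ^ 2 - x ^ 2) (-(2 * t)) t := by
      simpa using ((hasDerivAt_pow 2 t).const_sub (lam ^ 2))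
    exact h2.sqrt (ne_of_gt hA)
  have e3 : HasDerivAt (fun x : ℝ => Real.sqrt (lam ^ 2 * x ^ 2 - 1))
      (lam ^ 2 * (2 * t) / (2 * s3)) t := by
    have h2 : HasDerivAt (fun x : ℝ => lam ^ 2 * x ^ 2 - 1) (lam ^ 2 * (2 * t)) t := by
      simpa using (((hasDerivAt_pow 2 t).const_mul (lam ^ 2)).sub_const 1)
    exact h2.sqrt (ne_of_gt hB)
  have d1 : HasDerivAt (fun x : ℝ => lam / Real.sqrt (lam ^ 2 - x ^ 2))
      ((0 * s2 - lam * (-(2 * t) / (2 * s2))) / s2 ^ 2) t :=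
    (hasDerivAt_const t lam).div e2 (ne_of_gt hs2)
  have d2 : HasDerivAt (fun x : ℝ => x / (lam * Real.sqrt (lam ^ 2 * x ^ 2 - 1)))
      ((1 * (lam * s3) - t * (lam * (lam ^ 2 * (2 * t) / (2 * s3)))) / (lam * s3) ^ 2) t :=
    (hasDerivAt_id t).div ((e3.const_mul lam)) (by positivity)
  have d3 : HasDerivAt (fun x : ℝ => arccosh (lam * x)) (1 / s3 * lam) t := by
    have hc : HasDerivAt (fun x : ℝ => lam * x) lam t := by
      simpa using (hasDerivAt_id t).const_mul lam
    have := (hasDerivAt_arccosh hmt).comp t hc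
    exact this.congr_deriv (by simp [hs3d, mul_pow])
  have d4 : HasDerivAt (fun x : ℝ => (arccosh (lam * x) - arccosh lam) / lam ^ 2)
      (1 / s3 * lam / lam ^ 2) t := (d3.sub_const _).div_const _
  have : HasDerivAt (Ffun lam)
      (0 - (0 * s2 - lam * (-(2 * t) / (2 * s2))) / s2 ^ 2
        - (1 * (lam * s3) - t * (lam * (lam ^ 2 * (2 * t) / (2 * s3)))) / (lam * s3) ^ 2
        + 0 + 1 / s3 * lam / lam ^ 2) t := by
    exact ((((hasDerivAt_const t _).sub d1).sub d2).add (hasDerivAt_const t _)).add d4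
  convert this using 1
  rw [Gfun, ← hs2sq, ← hs3sq, Real.sqrt_sq hs2.le, Real.sqrt_sq hs3.le]
  field_simp
  linear_combination (s2 ^ 3) * hs3sq
end

section
variable {lam t : ℝ}

lemma hasDerivAt_G (hlam : 1 < lam) (ht : t ∈ Set.Ioo (1 / lam) lam) :
    HasDerivAt (Gfun lam) (Hfun lam t) t := by
  obtain ⟨ht0, hmt, hA, hB, hC⟩ := basic_facts hlam ht
  have hlam0 : 0 < lam := lt_trans one_pos hlam
  set s2 := Real.sqrt (lam ^ 2 - t ^ 2) with hs2d
  set s3 := Real.sqrt (lam ^ 2 * t ^ 2 - 1) with hs3d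
  have hs2 : 0 < s2 := Real.sqrt_pos.mpr hA
  have hs3 : 0 < s3 := Real.sqrt_pos.mpr hB
  have hs2sq : s2 ^ 2 = lam ^ 2 - t ^ 2 := Real.sq_sqrt (le_of_lt hA)
  have hs3sq : s3 ^ 2 = lam ^ 2 * t ^ 2 - 1 := Real.sq_sqrt (le_of_lt hB)
  have e2 : HasDerivAt (fun x : ℝ => Real.sqrt (lam ^ 2 - x ^ 2)) (-(2 * t) / (2 * s2)) t := by
    have h2 : HasDerivAt (fun x : ℝ => lam ^ 2 - x ^ 2) (-(2 * t)) t := by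
      simpa using ((hasDerivAt_pow 2 t).const_sub (lam ^ 2))
    exact h2.sqrt (ne_of_gt hA)
  have e2' : HasDerivAt (fun x : ℝ => lam ^ 2 - x ^ 2) (-(2 * t)) t := by
    simpa using ((hasDerivAt_pow 2 t).const_sub (lam ^ 2))
  have e3 : HasDerivAt (fun x : ℝ => Real.sqrt (lam ^ 2 * x ^ 2 - 1))
      (lam ^ 2 * (2 * t) / (2 * s3)) t := by
    have h2 : HasDerivAt (fun x : ℝ => lam ^ 2 * x ^ 2 - 1) (lam ^ 2 * (2 * t)) t := by
      simpa using (((hasDerivAt_pow 2 t).const_mul (lam ^ 2)).sub_const 1)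
    exact h2.sqrt (ne_of_gt hB)
  have e3' : HasDerivAt (fun x : ℝ => lam ^ 2 * x ^ 2 - 1) (lam ^ 2 * (2 * t)) t := by
    simpa using (((hasDerivAt_pow 2 t).const_mul (lam ^ 2)).sub_const 1)
  have D1 : HasDerivAt (fun x : ℝ => (lam ^ 2 - x ^ 2) * Real.sqrt (lam ^ 2 - x ^ 2))
      ((-(2 * t)) * s2 + (lam ^ 2 - t ^ 2) * (-(2 * t) / (2 * s2))) t := e2'.mul e2
  have D2 : HasDerivAt (fun x : ℝ => (lam ^ 2 * x ^ 2 - 1) * Real.sqrt (lam ^ 2 * x ^ 2 - 1))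
      ((lam ^ 2 * (2 * t)) * s3 + (lam ^ 2 * t ^ 2 - 1) * (lam ^ 2 * (2 * t) / (2 * s3))) t :=
    e3'.mul e3
  have t1 : HasDerivAt (fun x : ℝ => -(lam * x) / ((lam ^ 2 - x ^ 2) * Real.sqrt (lam ^ 2 - x ^ 2)))
      (((-lam) * ((lam ^ 2 - t ^ 2) * s2) - (-(lam * t)) *
        ((-(2 * t)) * s2 + (lam ^ 2 - t ^ 2) * (-(2 * t) / (2 * s2)))) / ((lam ^ 2 - t ^ 2) * s2) ^ 2) t := by
    have hn : HasDerivAt (fun x : ℝ => -(lam * x)) (-lam) t := by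
      exact (((hasDerivAt_id t).const_mul lam).neg).congr_deriv (by simp)
    exact hn.div D1 (by positivity)
  have t2 : HasDerivAt (fun x : ℝ => 1 / (lam * ((lam ^ 2 * x ^ 2 - 1) * Real.sqrt (lam ^ 2 * x ^ 2 - 1))))
      ((0 * (lam * ((lam ^ 2 * t ^ 2 - 1) * s3)) - 1 * (lam * ((lam ^ 2 * (2 * t)) * s3 + (lam ^ 2 * t ^ 2 - 1) * (lam ^ 2 * (2 * t) / (2 * s3))))) / (lam * ((lam ^ 2 * t ^ 2 - 1) * s3)) ^ 2) t :=
    (hasDerivAt_const t 1).div (D2.const_mul lam) (by positivity)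
  have t3 : HasDerivAt (fun x : ℝ => 1 / (lam * Real.sqrt (lam ^ 2 * x ^ 2 - 1)))
      ((0 * (lam * s3) - 1 * (lam * (lam ^ 2 * (2 * t) / (2 * s3)))) / (lam * s3) ^ 2) t :=
    (hasDerivAt_const t 1).div (e3.const_mul lam) (by positivity)
  have := (t1.add t2).add t3
  refine this.congr_deriv ?_
  rw [Hfun, ← hs2sq, ← hs3sq, Real.sqrt_sq hs2.le, Real.sqrt_sq hs3.le]
  field_simp
  linear_combination (-(lam ^ 2 * s2 ^ 5 * t)) * hs3sq
    + (-(lam ^ 2 * s3 ^ 5)) * hs2sq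
end

section
variable {lam t : ℝ}

lemma Hfun_neg (hlam : 1 < lam) (ht : t ∈ Set.Ioo (1 / lam) lam) : Hfun lam t < 0 := by
  obtain ⟨ht0, hmt, hA, hB, hC⟩ := basic_facts hlam ht
  have hlam0 : 0 < lam := lt_trans one_pos hlam
  have hs2 : 0 < Real.sqrt (lam ^ 2 - t ^ 2) := Real.sqrt_pos.mpr hA
  have hs3 : 0 < Real.sqrt (lam ^ 2 * t ^ 2 - 1) := Real.sqrt_pos.mpr hB
  have h1 : 0 < (lam * (lam ^ 2 + 2 * t ^ 2)) / ((lam ^ 2 - t ^ 2) ^ 2 * Real.sqrt (lam ^ 2 - t ^ 2)) := by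
    apply div_pos (by positivity) (by positivity)
  have h2 : 0 < (lam * t * (lam ^ 2 * t ^ 2 + 2)) / ((lam ^ 2 * t ^ 2 - 1) ^ 2 * Real.sqrt (lam ^ 2 * t ^ 2 - 1)) := by
    apply div_pos (by positivity) (by positivity)
  rw [Hfun]
  rw [neg_div]
  linarith

lemma Ffun_one (hlam : 1 < lam) : Ffun lam 1 = 0 := by
  have hlam0 : 0 < lam := lt_trans one_pos hlam
  rw [Ffun]
  norm_num

lemma Gfun_one (hlam : 1 < lam) : Gfun lam 1 = 0 := by
  have hlam0 : 0 < lam := lt_trans one_pos hlam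
  have hC : 0 < lam ^ 2 - 1 := by nlinarith
  have hs1 : 0 < Real.sqrt (lam ^ 2 - 1) := Real.sqrt_pos.mpr hC
  set s1 := Real.sqrt (lam ^ 2 - 1) with hs1d
  have hs1sq : s1 ^ 2 = lam ^ 2 - 1 := Real.sq_sqrt (le_of_lt hC)
  rw [Gfun]
  norm_num
  rw [← hs1sq]
  field_simp
  linear_combination hs1sq
end

/-- The λ-derivative `w = ∂_λ(v − u)` of the difference of the sphere and catenary
profiles vanishes to first order at `t = 1`, is strictly concave on `(1/λ, λ)`,
and hence is nonpositive there. -/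
theorem lambda_derivative_difference_nonpos (lam : ℝ) (hlam : 1 < lam)
    (U V : ℝ → ℝ → ℝ) (w : ℝ → ℝ)
    (hU : ∀ mu t, U mu t = (arccosh (mu * t) - arccosh mu) / mu)
    (hV : ∀ mu t, V mu t = Real.sqrt (mu ^ 2 - 1) - Real.sqrt (mu ^ 2 - t ^ 2))
    (hw : ∀ t, w t = deriv (fun mu => V mu t - U mu t) lam) :
    w 1 = 0 ∧ deriv w 1 = 0 ∧
    (∀ t ∈ Set.Ioo (1 / lam) lam, deriv (deriv w) t < 0) ∧
    (∀ t ∈ Set.Ioo (1 / lam) lam, w t ≤ 0) := by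
  have hlam0 : 0 < lam := lt_trans one_pos hlam
  have h1mem : (1 : ℝ) ∈ Set.Ioo (1 / lam) lam := ⟨(div_lt_one hlam0).mpr hlam, hlam⟩
  -- w equals Ffun on the interval
  have key1 : Set.EqOn w (Ffun lam) (Set.Ioo (1 / lam) lam) := by
    intro t ht
    rw [hw]
    have heq : (fun mu => V mu t - U mu t) = (fun mu : ℝ =>
        (Real.sqrt (mu ^ 2 - 1) - Real.sqrt (mu ^ 2 - t ^ 2))
          - (arccosh (mu * t) - arccosh mu) / mu) := funext fun mu => by rw [hU, hV]
    rw [heq]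
    exact (hasDerivAt_mu hlam ht).deriv
  have hopen : IsOpen (Set.Ioo (1 / lam) lam) := isOpen_Ioo
  -- w has derivative Gfun on the interval
  have hwG : ∀ t ∈ Set.Ioo (1 / lam) lam, HasDerivAt w (Gfun lam t) t := by
    intro t ht
    exact (hasDerivAt_F hlam ht).congr_of_eventuallyEq
      (Filter.eventuallyEq_of_mem (hopen.mem_nhds ht) key1)
  have hderivwG : Set.EqOn (deriv w) (Gfun lam) (Set.Ioo (1 / lam) lam) :=
    fun t ht => (hwG t ht).deriv
  -- deriv w has derivative Hfun on the interval
  have hgH : ∀ t ∈ Set.Ioo (1 / lam) lam, HasDerivAt (deriv w) (Hfun lam t) t := by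
    intro t ht
    exact (hasDerivAt_G hlam ht).congr_of_eventuallyEq
      (Filter.eventuallyEq_of_mem (hopen.mem_nhds ht) hderivwG)
  have hw1 : w 1 = 0 := by rw [key1 h1mem, Ffun_one hlam]
  have hdw1 : deriv w 1 = 0 := by rw [hderivwG h1mem, Gfun_one hlam]
  have hdd : ∀ t ∈ Set.Ioo (1 / lam) lam, deriv (deriv w) t < 0 := by
    intro t ht
    rw [(hgH t ht).deriv]
    exact Hfun_neg hlam ht
  refine ⟨hw1, hdw1, hdd, ?_⟩
  -- deriv w is strictly decreasing on the interval
  have hanti : StrictAntiOn (deriv w) (Set.Ioo (1 / lam) lam) := by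
    apply strictAntiOn_of_deriv_neg (convex_Ioo _ _)
    · exact fun x hx => ((hgH x hx).continuousAt).continuousWithinAt
    · intro x hx
      rw [interior_Ioo] at hx
      exact hdd x hx
  intro t ht
  have hsub : ∀ x ∈ Set.Icc (min t 1) (max t 1), x ∈ Set.Ioo (1 / lam) lam := by
    intro x hx
    constructor
    · exact lt_of_lt_of_le (lt_min ht.1 h1mem.1) hx.1
    · exact lt_of_le_of_lt hx.2 (max_lt ht.2 h1mem.2)
  rcases lt_trichotomy t 1 with hlt | heq | hgt
  · -- t < 1 : w strictly increasing on [t,1]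
    have hmono : StrictMonoOn w (Set.Icc t 1) := by
      apply strictMonoOn_of_deriv_pos (convex_Icc _ _)
      · intro x hx
        have hx' : x ∈ Set.Ioo (1 / lam) lam := by
          apply hsub; rw [min_eq_left (le_of_lt hlt), max_eq_right (le_of_lt hlt)]; exact hx
        exact ((hwG x hx').continuousAt).continuousWithinAt
      · intro x hx
        rw [interior_Icc] at hx
        have hx' : x ∈ Set.Ioo (1 / lam) lam := by
          apply hsub; rw [min_eq_left (le_of_lt hlt), max_eq_right (le_of_lt hlt)]
          exact ⟨le_of_lt hx.1, le_of_lt hx.2⟩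
        have := hanti hx' h1mem hx.2
        rw [hdw1] at this
        linarith
    have := hmono (Set.left_mem_Icc.mpr (le_of_lt hlt))
      (Set.right_mem_Icc.mpr (le_of_lt hlt)) hlt
    rw [hw1] at this
    linarith
  · rw [heq, hw1]
  · -- 1 < t : w strictly decreasing on [1,t]
    have hmono : StrictAntiOn w (Set.Icc 1 t) := by
      apply strictAntiOn_of_deriv_neg (convex_Icc _ _)
      · intro x hx
        have hx' : x ∈ Set.Ioo (1 / lam) lam := by
          apply hsub; rw [min_eq_right (le_of_lt hgt), max_eq_left (le_of_lt hgt)]; exact hx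
        exact ((hwG x hx').continuousAt).continuousWithinAt
      · intro x hx
        rw [interior_Icc] at hx
        have hx' : x ∈ Set.Ioo (1 / lam) lam := by
          apply hsub; rw [min_eq_right (le_of_lt hgt), max_eq_left (le_of_lt hgt)]
          exact ⟨le_of_lt hx.1, le_of_lt hx.2⟩
        have := hanti h1mem hx' hx.1
        rw [hdw1] at this
        linarith
    have := hmono (Set.left_mem_Icc.mpr (le_of_lt hgt))
      (Set.right_mem_Icc.mpr (le_of_lt hgt)) hgt
    rw [hw1] at this
    linarith
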